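/- Assume the polynomial Hales–Jewett theorem (as in the paper). Let G be a commutative group and p : G → G a polynomial mapping (in the sense that some finite iterate of difference operators D_a f(b) = f(a+b) − f(b) annihilates it) with p(0) = 0. Then for every finite coloring of G and every sequence (g_j) in G there exist h ∈ G and a nonempty finite γ ⊆ ℕ such that h and h + p(Σ_{j∈γ} g_j) have the same color. -/

import Mathlib

/-- Iterated difference operators: `itDiff [a₁,…,a_k] f` is `D_{a_k} ⋯ D_{a_1} f`, where
`(D_a f)(b) = f(a+b) − f(b)`. -/
def itDiff {G : Type*} [AddCommGroup G] : List G → (G → G) → (G → G)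
  | [], f => f
  | a :: l, f => itDiff l (fun b => f (a + b) - f b)

/-- `f : G → G` is a polynomial mapping if some finite iterate of difference operators
annihilates it. -/
def IsPolynomialMap {G : Type*} [AddCommGroup G] (f : G → G) : Prop :=
  ∃ d : ℕ, ∀ l : List G, l.length = d → itDiff l f = fun _ => 0

section Aux
variable {G : Type*} [AddCommGroup G]

lemma itDiff_append (l₁ l₂ : List G) (f : G → G) :
    itDiff (l₁ ++ l₂) f = itDiff l₂ (itDiff l₁ f) := by
  induction l₁ generalizing f with
  | nil => rfl
  | cons a l ih => simp [itDiff, ih]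

lemma itDiff_zero (l : List G) : itDiff l (fun _ => (0:G)) = fun _ => 0 := by
  induction l with
  | nil => rfl
  | cons a l ih => simpa [itDiff] using ih

lemma itDiff_perm {l l' : List G} (h : l.Perm l') : ∀ f : G → G, itDiff l f = itDiff l' f := by
  induction h with
  | nil => intro f; rfl
  | cons a _ ih => intro f; simp only [itDiff]; exact ih _
  | swap a b l =>
    intro f; simp only [itDiff]
    refine congrArg _ (funext fun x => ?_)
    simp only [add_left_comm]
    abel
  | trans _ _ ih1 ih2 => intro f; rw [ih1, ih2]

lemma expand (g : ℕ → G) (γ : Finset ℕ) :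
    ∀ f : G → G, f (∑ j ∈ γ, g j) =
      ∑ β ∈ γ.powerset, itDiff ((β.sort (· ≤ ·)).map g) f 0 := by
  induction γ using Finset.induction_on with
  | empty => intro f; simp [itDiff]
  | @insert k s hk ih =>
    intro f
    rw [Finset.sum_insert hk, Finset.sum_powerset_insert hk]
    have h1 := ih (fun b => f (g k + b) - f b)
    have h2 := ih f
    have key : ∀ β ∈ s.powerset,
        itDiff (((insert k β).sort (· ≤ ·)).map g) f 0
          = itDiff ((β.sort (· ≤ ·)).map g) (fun b => f (g k + b) - f b) 0 := by
      intro β hβ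
      have hkβ : k ∉ β := fun hkk => hk (Finset.mem_powerset.1 hβ hkk)
      have hperm : (((insert k β).sort (· ≤ ·)).map g).Perm
          (g k :: ((β.sort (· ≤ ·)).map g)) :=
        ((Finset.sort_perm_toList (insert k β) _).trans
          ((Finset.toList_insert hkβ).trans
            ((Finset.sort_perm_toList β _).symm.cons k))).map g
      rw [itDiff_perm hperm f]
      rfl
    rw [Finset.sum_congr rfl key, ← h1, ← h2]
    abel

end Aux

/-- The canonical representative vector of a finite set `β ⊆ ℕ`: the sorted list of
elements of `β`, padded at the end with the maximal element. -/
def canonMap (D : ℕ) (β : Finset ℕ) : Fin D → ℕ :=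
  fun i => (β.sort (· ≤ ·)).getD i ((β.sort (· ≤ ·)).getD (β.card - 1) 0)

lemma canonMap_mem {D : ℕ} {β : Finset ℕ} (hβ : β.Nonempty) (i : Fin D) :
    canonMap D β i ∈ β := by
  have hL : (β.sort (· ≤ ·)).length = β.card := Finset.length_sort _
  have hc : 0 < β.card := Finset.card_pos.2 hβ
  have hdef : (β.sort (· ≤ ·)).getD (β.card - 1) 0 ∈ β := by
    rw [List.getD_eq_getElem _ _ (by omega)]
    exact (Finset.mem_sort _).1 (List.getElem_mem _)
  by_cases h : (i : ℕ) < (β.sort (· ≤ ·)).length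
  · rw [canonMap, List.getD_eq_getElem _ _ h]
    exact (Finset.mem_sort _).1 (List.getElem_mem _)
  · rw [canonMap, List.getD_eq_default _ _ (le_of_not_gt h)]
    exact hdef

lemma image_canonMap {D : ℕ} {β : Finset ℕ} (hβ : β.Nonempty) (hc : β.card ≤ D) :
    Finset.image (canonMap D β) Finset.univ = β := by
  apply Finset.Subset.antisymm
  · intro x hx
    obtain ⟨i, -, rfl⟩ := Finset.mem_image.1 hx
    exact canonMap_mem hβ i
  · intro b hb
    have hbL : b ∈ β.sort (· ≤ ·) := (Finset.mem_sort _).2 hb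
    obtain ⟨j, hj, hjb⟩ := List.mem_iff_getElem.1 hbL
    have hjD : j < D := by
      rw [Finset.length_sort] at hj; omega
    refine Finset.mem_image.2 ⟨⟨j, hjD⟩, Finset.mem_univ _, ?_⟩
    rw [canonMap, List.getD_eq_getElem _ _ (by simpa using hj)]
    exact hjb

/-- Assuming the polynomial Hales–Jewett theorem: for any commutative group `G`, any
polynomial mapping `p : G → G` with `p(0) = 0`, any finite coloring of `G` and any
sequence `(g_j)` in `G`, there are `h ∈ G` and a nonempty finite `γ ⊆ ℕ` with `h` and
`h + p(Σ_{j∈γ} g_j)` of the same color. -/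
theorem PHJ_implies_polynomial_IP_recurrence
    (PHJ : ∀ r d q : ℕ, ∃ N : ℕ, ∀ χ : Finset ((Fin d → ℕ) × ℕ) → Fin r,
      ∃ (a : Finset ((Fin d → ℕ) × ℕ)) (γ : Finset ℕ),
        γ.Nonempty ∧ γ ⊆ Finset.Icc 1 N ∧
        a ⊆ (Fintype.piFinset fun _ : Fin d => Finset.Icc 1 N) ×ˢ Finset.Icc 1 q ∧
        Disjoint a ((Fintype.piFinset fun _ : Fin d => γ) ×ˢ Finset.Icc 1 q) ∧
        ∀ i ∈ Finset.Icc 1 q,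
          χ (a ∪ (Fintype.piFinset fun _ : Fin d => γ) ×ˢ {i}) = χ a)
    {G : Type*} [AddCommGroup G] (p : G → G) (hp : IsPolynomialMap p) (hp0 : p 0 = 0) :
    ∀ (r : ℕ) (χ : G → Fin r) (g : ℕ → G),
      ∃ (h : G) (γ : Finset ℕ), γ.Nonempty ∧ χ (h + p (∑ j ∈ γ, g j)) = χ h := by
  intro r χ g
  obtain ⟨d, hd⟩ := hp
  -- any list of length at least `d` annihilates `p`
  have hD : ∀ l : List G, d ≤ l.length → itDiff l p = fun _ => 0 := by
    intro l hl
    have hsplit : l = l.take d ++ l.drop d := (List.take_append_drop d l).symm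
    rw [hsplit, itDiff_append, hd _ (by rw [List.length_take]; omega), itDiff_zero]
  set D := d + 1 with hDdef
  -- the "derivative coefficients"
  set c : Finset ℕ → G := fun β => itDiff ((β.sort (· ≤ ·)).map g) p 0 with hc
  -- the weight of a vector: the coefficient of its image if it is canonical, else 0
  set ψ : (Fin D → ℕ) → G := fun v =>
    if canonMap D (Finset.image v Finset.univ) = v then c (Finset.image v Finset.univ)
    else 0 with hψ
  set Ψ : (Fin D → ℕ) × ℕ → G := fun x => if x.2 = 1 then ψ x.1 else 0 with hΨ
  obtain ⟨N, hN⟩ := PHJ r D 1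
  obtain ⟨a, γ, hγne, -, -, hdisj, hcolor⟩ := hN fun A => χ (∑ x ∈ A, Ψ x)
  refine ⟨∑ x ∈ a, Ψ x, γ, hγne, ?_⟩
  -- the key computation: the weight of the `γ`-block is `p (∑ j ∈ γ, g j)`
  have hkey : (∑ x ∈ (Fintype.piFinset fun _ : Fin D => γ) ×ˢ ({1} : Finset ℕ), Ψ x)
      = p (∑ j ∈ γ, g j) := by
    rw [Finset.sum_product]
    simp only [Finset.sum_singleton, hΨ, eq_self_iff_true, if_true]
    -- sum of ψ over the cube equals the sum of the coefficients over canonical sets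
    have hstep1 : (∑ v ∈ Fintype.piFinset fun _ : Fin D => γ, ψ v)
        = ∑ β ∈ γ.powerset.filter (fun β => β.Nonempty ∧ β.card ≤ D), c β := by
      rw [hψ, ← Finset.sum_filter]
      refine Finset.sum_bij (fun v _ => Finset.image v Finset.univ) ?_ ?_ ?_ ?_
      · intro v hv
        rw [Finset.mem_filter] at hv ⊢
        obtain ⟨hv1, _⟩ := hv
        refine ⟨Finset.mem_powerset.2 ?_, ?_, ?_⟩
        · intro x hx
          obtain ⟨i, -, rfl⟩ := Finset.mem_image.1 hx
          exact (Fintype.mem_piFinset.1 hv1) i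
        · exact Finset.image_nonempty.2 Finset.univ_nonempty
        · simpa using Finset.card_image_le (s := (Finset.univ : Finset (Fin D))) (f := v)
      · intro v₁ hv₁ v₂ hv₂ heq
        rw [Finset.mem_filter] at hv₁ hv₂
        rw [← hv₁.2, ← hv₂.2,
          show Finset.image v₁ Finset.univ = Finset.image v₂ Finset.univ from heq]
      · intro β hβ
        rw [Finset.mem_filter] at hβ
        obtain ⟨hβγ, hβne, hβcard⟩ := hβ
        have him : Finset.image (canonMap D β) Finset.univ = β := image_canonMap hβne hβcard
        refine ⟨canonMap D β, Finset.mem_filter.2 ⟨?_, ?_⟩, him⟩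
        · exact Fintype.mem_piFinset.2 fun i => Finset.mem_powerset.1 hβγ (canonMap_mem hβne i)
        · rw [him]
      · intro v hv
        rfl
    -- extending the sum to the whole powerset only adds zero terms
    have hstep2 : (∑ β ∈ γ.powerset.filter (fun β => β.Nonempty ∧ β.card ≤ D), c β)
        = ∑ β ∈ γ.powerset, c β := by
      refine Finset.sum_filter_of_ne ?_
      intro β _ hβ0
      constructor
      · rcases Finset.eq_empty_or_nonempty β with rfl | hne
        · exact absurd (by simpa [hc, itDiff] using hp0) hβ0
        · exact hne
      · by_contra hcard
        apply hβ0
        have hlen : d ≤ ((β.sort (· ≤ ·)).map g).length := by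
          rw [List.length_map, Finset.length_sort]; omega
        rw [hc]
        simp only
        rw [hD _ hlen]
    rw [hstep1, hstep2, expand g γ p]
  -- put everything together
  have h1 : (1 : ℕ) ∈ Finset.Icc 1 1 := by simp
  have hcolor1 := hcolor 1 h1
  rw [Finset.sum_union (by simpa [Finset.Icc_self] using hdisj)] at hcolor1
  rw [← hkey]
  exact hcolor1
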